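/- Let X be a separable LOTS and μ a probability measure on its Borel σ-algebra with cdf F. If X has no minimum then inf F(X) = 0, and in all cases sup F(X) = 1. -/

import Mathlib

open MeasureTheory

theorem stmt9 {X : Type*} [LinearOrder X] [TopologicalSpace X] [OrderTopology X]
    [TopologicalSpace.SeparableSpace X] [MeasurableSpace X] [BorelSpace X]
    (μ : Measure X) [IsProbabilityMeasure μ] :
    ((¬∃ m : X, ∀ x, m ≤ x) →
        sInf (Set.range fun x : X => (μ (Set.Iic x)).toReal) = 0) ∧
      sSup (Set.range fun x : X => (μ (Set.Iic x)).toReal) = 1 := by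
  -- X is nonempty since μ is a probability measure
  have hXne : Nonempty X := by
    by_contra h
    rw [not_nonempty_iff] at h
    have h1 : μ Set.univ = 1 := measure_univ
    rw [Set.univ_eq_empty_iff.2 h, measure_empty] at h1
    exact zero_ne_one h1
  obtain ⟨D, hDc, hDd⟩ := TopologicalSpace.exists_countable_dense X
  have hDne : D.Nonempty := hDd.nonempty
  haveI : Countable ↥D := hDc.to_subtype
  haveI : Nonempty ↥D := hDne.to_subtype
  set F : X → ℝ := fun x => (μ (Set.Iic x)).toReal with hF
  have hRne : (Set.range F).Nonempty := Set.range_nonempty F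
  have hFle : ∀ x, F x ≤ 1 := by
    intro x
    have : μ (Set.Iic x) ≤ 1 := prob_le_one
    simpa [hF] using ENNReal.toReal_le_of_le_ofReal zero_le_one (by simpa using this)
  have hFnn : ∀ x, 0 ≤ F x := fun x => ENNReal.toReal_nonneg
  have hbdd : BddAbove (Set.range F) := ⟨1, by rintro _ ⟨x, rfl⟩; exact hFle x⟩
  have hbddb : BddBelow (Set.range F) := ⟨0, by rintro _ ⟨x, rfl⟩; exact hFnn x⟩
  constructor
  · -- no minimum → inf = 0
    intro hnomin
    have hlt : ∀ x : X, ∃ y : X, y < x := by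
      intro x
      by_contra h
      push_neg at h
      exact hnomin ⟨x, fun z => h z⟩
    -- intersection over D is empty
    have hint : ⋂ d : ↥D, Set.Iic (d : X) = (∅ : Set X) := by
      ext x
      simp only [Set.mem_iInter, Set.mem_Iic, Set.mem_empty_iff_false, iff_false, not_forall]
      obtain ⟨y, hy⟩ := hlt x
      obtain ⟨d, hdD, hdy⟩ := hDd.exists_mem_open isOpen_Iio ⟨y, hy⟩
      exact ⟨⟨d, hdD⟩, not_le.2 hdy⟩
    have hdir : Directed (· ⊇ ·) (fun d : ↥D => Set.Iic (d : X)) := by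
      intro d e
      rcases le_total (d : X) (e : X) with h | h
      · exact ⟨d, subset_rfl, Set.Iic_subset_Iic.2 h⟩
      · exact ⟨e, Set.Iic_subset_Iic.2 h, subset_rfl⟩
    have hiInf : ⨅ d : ↥D, μ (Set.Iic (d : X)) = 0 := by
      rw [← hdir.measure_iInter (fun d => (measurableSet_Iic).nullMeasurableSet)
        ⟨Classical.arbitrary _, measure_ne_top μ _⟩, hint, measure_empty]
    refine le_antisymm ?_ (le_csInf hRne (by rintro _ ⟨x, rfl⟩; exact hFnn x))
    by_contra h
    push_neg at h
    set c := sInf (Set.range F) with hc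
    have hc0 : 0 < c := h
    have hlow : ∀ x : X, ENNReal.ofReal c ≤ μ (Set.Iic x) := by
      intro x
      exact ENNReal.ofReal_le_of_le_toReal (csInf_le hbddb ⟨x, rfl⟩)
    have : ENNReal.ofReal c ≤ 0 := hiInf ▸ le_iInf fun d => hlow (d : X)
    have : ENNReal.ofReal c = 0 := le_antisymm this zero_le
    rw [ENNReal.ofReal_eq_zero] at this
    linarith
  · -- sup = 1
    refine le_antisymm (csSup_le hRne (by rintro _ ⟨x, rfl⟩; exact hFle x)) ?_
    by_cases hmax : ∃ m : X, ∀ x, x ≤ m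
    · obtain ⟨m, hm⟩ := hmax
      have : Set.Iic m = Set.univ := Set.eq_univ_of_forall fun x => hm x
      have hFm : F m = 1 := by simp [hF, this]
      exact hFm ▸ le_csSup hbdd ⟨m, rfl⟩
    · push_neg at hmax
      have hgt : ∀ x : X, ∃ y : X, x < y := by
        intro x
        obtain ⟨y, hy⟩ := hmax x
        exact ⟨y, hy⟩
      have huni : ⋃ d : ↥D, Set.Iic (d : X) = Set.univ := by
        apply Set.eq_univ_of_forall
        intro x
        obtain ⟨y, hy⟩ := hgt x
        obtain ⟨d, hdD, hdy⟩ := hDd.exists_mem_open isOpen_Ioi ⟨y, hy⟩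
        exact Set.mem_iUnion.2 ⟨⟨d, hdD⟩, le_of_lt hdy⟩
      have hdir : Directed (· ⊆ ·) (fun d : ↥D => Set.Iic (d : X)) := by
        intro d e
        rcases le_total (d : X) (e : X) with h | h
        · exact ⟨e, Set.Iic_subset_Iic.2 h, subset_rfl⟩
        · exact ⟨d, subset_rfl, Set.Iic_subset_Iic.2 h⟩
      have hiSup : ⨆ d : ↥D, μ (Set.Iic (d : X)) = 1 := by
        rw [← hdir.measure_iUnion, huni, measure_univ]
      by_contra h
      push_neg at h
      set c := sSup (Set.range F) with hc
      have hup : ∀ d : ↥D, μ (Set.Iic (d : X)) ≤ ENNReal.ofReal c := by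
        intro d
        rw [ENNReal.le_ofReal_iff_toReal_le (measure_ne_top μ _)
          (le_trans (hFnn (d : X)) (le_csSup hbdd ⟨(d : X), rfl⟩))]
        exact le_csSup hbdd ⟨(d : X), rfl⟩
      have h1 : (1 : ENNReal) ≤ ENNReal.ofReal c := hiSup ▸ iSup_le hup
      have h2 : ENNReal.ofReal c < 1 := by
        rw [← ENNReal.ofReal_one]
        exact (ENNReal.ofReal_lt_ofReal_iff one_pos).2 h
      exact absurd h1 (not_le.2 h2)
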